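/- arXiv:0708.3301 — 2 statements merged into one kernel-verified Lean document; each statement's English description precedes it below -/
import Mathlib

section
/- For every natural number n, the Bell number Bₙ equals (1/e) · ∑_{k=0}^{∞} kⁿ/k! (Dobinski's formula). -/
/-- Stirling numbers of the second kind. -/
def stirling : ℕ → ℕ → ℕ
  | 0, 0 => 1
  | 0, _ + 1 => 0
  | _ + 1, 0 => 0
  | n + 1, k + 1 => (k + 1) * stirling n (k + 1) + stirling n k

/-- Bell numbers, via the standard recurrence. -/
def bell : ℕ → ℕ
  | 0 => 1
  | n + 1 => ∑ k ∈ (Finset.range (n + 1)).attach, Nat.choose n k.1 * bell k.1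
decreasing_by exact Finset.mem_range.mp k.2

open Real

lemma shift_term (n k : ℕ) :
    ((k + 1 : ℕ) : ℝ) ^ (n + 1) / Nat.factorial (k + 1)
      = ∑ j ∈ Finset.range (n + 1), (n.choose j : ℝ) * ((k : ℝ) ^ j / Nat.factorial k) := by
  have hk : (k.factorial : ℝ) ≠ 0 := by positivity
  have h1 : ((k + 1 : ℕ) : ℝ) ^ (n + 1) / Nat.factorial (k + 1)
      = ((k : ℝ) + 1) ^ n / Nat.factorial k := by
    push_cast [Nat.factorial_succ]
    rw [pow_succ]
    field_simp
  rw [h1, add_pow, Finset.sum_div]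
  refine Finset.sum_congr rfl fun j hj => ?_
  simp only [one_pow, mul_one]
  ring

lemma bell_succ (n : ℕ) :
    (bell (n + 1) : ℝ) = ∑ j ∈ Finset.range (n + 1), (n.choose j : ℝ) * bell j := by
  rw [bell]
  push_cast
  exact Finset.sum_attach (Finset.range (n + 1)) (fun j => (n.choose j : ℝ) * bell j)

lemma dob_main (n : ℕ) :
    Summable (fun k : ℕ => (k : ℝ) ^ n / Nat.factorial k) ∧
      ∑' k : ℕ, (k : ℝ) ^ n / Nat.factorial k = Real.exp 1 * bell n := by
  induction n using Nat.strong_induction_on with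
  | _ n ih =>
    match n with
    | 0 =>
      have hs : Summable (fun k : ℕ => (k : ℝ) ^ 0 / Nat.factorial k) := by
        simpa using Real.summable_pow_div_factorial 1
      refine ⟨hs, ?_⟩
      have : Real.exp 1 = ∑' k : ℕ, (1 : ℝ) ^ k / Nat.factorial k := by
        rw [Real.exp_eq_exp_ℝ, NormedSpace.exp_eq_tsum_div]
      simp only [pow_zero, this, one_pow, bell, Nat.cast_one, mul_one]
    | n + 1 =>
      have ihs : ∀ j ∈ Finset.range (n + 1),
          Summable (fun k : ℕ => (n.choose j : ℝ) * ((k : ℝ) ^ j / Nat.factorial k)) :=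
        fun j hj => ((ih j (Finset.mem_range.mp hj)).1).mul_left _
      have hshift : Summable (fun k : ℕ =>
          ((k + 1 : ℕ) : ℝ) ^ (n + 1) / Nat.factorial (k + 1)) := by
        simp only [shift_term]
        exact summable_sum ihs
      have hs : Summable (fun k : ℕ => (k : ℝ) ^ (n + 1) / Nat.factorial k) :=
        (summable_nat_add_iff 1).mp hshift
      refine ⟨hs, ?_⟩
      rw [Summable.tsum_eq_zero_add hs]
      simp only [Nat.cast_zero, ne_eq, Nat.succ_ne_zero, not_false_eq_true, zero_pow,
        Nat.factorial_zero, Nat.cast_one, zero_div, zero_add]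
      calc ∑' k : ℕ, ((k + 1 : ℕ) : ℝ) ^ (n + 1) / Nat.factorial (k + 1)
          = ∑' k : ℕ, ∑ j ∈ Finset.range (n + 1),
              (n.choose j : ℝ) * ((k : ℝ) ^ j / Nat.factorial k) := by
            simp only [shift_term]
        _ = ∑ j ∈ Finset.range (n + 1),
              ∑' k : ℕ, (n.choose j : ℝ) * ((k : ℝ) ^ j / Nat.factorial k) :=
            Summable.tsum_finsetSum ihs
        _ = ∑ j ∈ Finset.range (n + 1), (n.choose j : ℝ) * (Real.exp 1 * bell j) := by
            refine Finset.sum_congr rfl fun j hj => ?_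
            rw [tsum_mul_left, (ih j (Finset.mem_range.mp hj)).2]
        _ = Real.exp 1 * bell (n + 1) := by
            rw [bell_succ, Finset.mul_sum]
            exact Finset.sum_congr rfl fun j hj => by ring

theorem dobinski (n : ℕ) :
    (bell n : ℝ) = (1 / Real.exp 1) * ∑' k : ℕ, (k : ℝ) ^ n / Nat.factorial k := by
  obtain ⟨-, h⟩ := dob_main n
  rw [h]
  have := Real.exp_ne_zero 1
  field_simp
end

section
/- For every natural number n ≥ 1 and real t, Im(∫₀^π exp(t·e^{iθ})·sin(nθ) dθ) = (tⁿ/n!)·(π/2). -/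
open Real Complex intervalIntegral MeasureTheory

lemma cos_int_integral (m : ℤ) (hm : m ≠ 0) :
    ∫ θ in (0:ℝ)..π, Real.cos (m * θ) = 0 := by
  have hc : (m : ℝ) ≠ 0 := Int.cast_ne_zero.mpr hm
  rw [intervalIntegral.integral_comp_mul_left (fun x => Real.cos x) hc]
  simp [Real.sin_int_mul_pi]

lemma sin_orth (k n : ℕ) (hn : 1 ≤ n) :
    ∫ θ in (0:ℝ)..π, Real.sin (k * θ) * Real.sin (n * θ) =
      if k = n then π / 2 else 0 := by
  by_cases h : k = n
  · subst h
    simp only [if_pos rfl]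
    have hk : (k : ℝ) ≠ 0 := Nat.cast_ne_zero.mpr (by omega)
    have : ∀ θ : ℝ, Real.sin (k * θ) * Real.sin (k * θ) = Real.sin (k * θ) ^ 2 := by
      intro θ; ring
    simp_rw [this]
    rw [intervalIntegral.integral_comp_mul_left (fun x => Real.sin x ^ 2) hk]
    have hs : Real.sin ((k : ℝ) * π) = 0 := by
      exact_mod_cast Real.sin_int_mul_pi (k : ℤ)
    rw [integral_sin_sq]
    simp [hs]
    field_simp
  · simp only [if_neg h]
    have key : ∀ θ : ℝ, Real.sin (k * θ) * Real.sin (n * θ) =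
        (Real.cos (((k : ℤ) - n : ℤ) * θ) - Real.cos (((k : ℤ) + n : ℤ) * θ)) / 2 := by
      intro θ
      rw [Real.cos_sub_cos]
      push_cast
      have h1 : (((k : ℝ) - n) * θ + ((k : ℝ) + n) * θ) / 2 = k * θ := by ring
      have h2 : (((k : ℝ) - n) * θ - ((k : ℝ) + n) * θ) / 2 = -(n * θ) := by ring
      rw [h1, h2, Real.sin_neg]
      ring
    simp_rw [key]
    rw [intervalIntegral.integral_div]
    rw [intervalIntegral.integral_sub
      (Continuous.intervalIntegrable (by fun_prop) _ _)
      (Continuous.intervalIntegrable (by fun_prop) _ _)]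
    rw [cos_int_integral _ (by omega), cos_int_integral _ (by omega)]
    norm_num

theorem im_integral_exp_real (n : ℕ) (hn : 1 ≤ n) (t : ℝ) :
    (∫ θ in (0:ℝ)..π,
        Complex.exp ((t : ℂ) * Complex.exp (θ * Complex.I)) * (Real.sin (n * θ) : ℂ)).im =
      t ^ n / Nat.factorial n * (π / 2) := by
  have hpi : (0:ℝ) ≤ π := Real.pi_pos.le
  set F : ℕ → ℝ → ℂ := fun k θ =>
    ((t : ℂ) * Complex.exp (θ * Complex.I)) ^ k / (Nat.factorial k : ℂ) *
      (Real.sin (n * θ) : ℂ) with hF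
  -- alternative form
  have hFeq : ∀ k θ, F k θ =
      ((t ^ k / (Nat.factorial k) : ℝ) : ℂ) * Complex.exp ((k * θ : ℝ) * Complex.I) *
        ((Real.sin (n * θ) : ℝ) : ℂ) := by
    intro k θ
    rw [hF]
    simp only
    rw [mul_pow, ← Complex.exp_nat_mul]
    push_cast
    ring
  -- norm bound
  have hnorm : ∀ k θ, ‖F k θ‖ ≤ |t| ^ k / (Nat.factorial k) := by
    intro k θ
    rw [hFeq]
    rw [norm_mul, norm_mul, Complex.norm_real, Complex.norm_real,
      Complex.norm_exp_ofReal_mul_I]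
    have h1 : ‖t ^ k / (Nat.factorial k : ℝ)‖ = |t| ^ k / (Nat.factorial k) := by
      rw [Real.norm_eq_abs, abs_div, _root_.abs_pow, Nat.abs_cast]
    rw [h1, mul_one]
    have h2 : ‖Real.sin (n * θ)‖ ≤ 1 := by
      rw [Real.norm_eq_abs]; exact Real.abs_sin_le_one _
    have h3 : 0 ≤ |t| ^ k / (Nat.factorial k : ℝ) := by positivity
    nlinarith
  have hcont : ∀ k, Continuous (F k) := by
    intro k
    rw [hF]
    fun_prop
  have hInt : ∀ k, IntegrableOn (F k) (Set.Ioc 0 π) volume :=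
    fun k => (hcont k).integrableOn_Ioc
  have hsumnorm : Summable fun k => ∫ θ in Set.Ioc (0:ℝ) π, ‖F k θ‖ := by
    refine Summable.of_nonneg_of_le
      (fun k => integral_nonneg fun θ => norm_nonneg _) (fun k => ?_)
      ((Real.summable_pow_div_factorial |t|).mul_left π)
    calc ∫ θ in Set.Ioc (0:ℝ) π, ‖F k θ‖
        ≤ ∫ _ in Set.Ioc (0:ℝ) π, (|t| ^ k / (Nat.factorial k)) := by
          refine integral_mono (hInt k).norm (integrable_const _) ?_
          intro θ; exact hnorm k θ
      _ = π * (|t| ^ k / (Nat.factorial k)) := by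
          rw [setIntegral_const, measureReal_def, Real.volume_Ioc, sub_zero, ENNReal.toReal_ofReal hpi,
            smul_eq_mul]
  have hswap := MeasureTheory.hasSum_integral_of_summable_integral_norm
    (μ := volume.restrict (Set.Ioc (0:ℝ) π)) hInt hsumnorm
  -- pointwise series
  have hpt : ∀ θ : ℝ,
      Complex.exp ((t : ℂ) * Complex.exp (θ * Complex.I)) * (Real.sin (n * θ) : ℂ) =
        ∑' k, F k θ := by
    intro θ
    have hz : ∀ z : ℂ, Complex.exp z = ∑' k : ℕ, z ^ k / (Nat.factorial k : ℂ) := fun z => by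
      rw [Complex.exp_eq_exp_ℂ, NormedSpace.exp_eq_tsum_div]
    conv_lhs => rw [hz ((t : ℂ) * Complex.exp (θ * Complex.I))]
    show (∑' k : ℕ, ((t : ℂ) * Complex.exp (θ * Complex.I)) ^ k / (Nat.factorial k : ℂ)) *
        ((Real.sin (n * θ) : ℝ) : ℂ) = _
    exact tsum_mul_right.symm
  have hIeq : (∫ θ in (0:ℝ)..π,
      Complex.exp ((t : ℂ) * Complex.exp (θ * Complex.I)) * (Real.sin (n * θ) : ℂ)) =
      ∑' k, ∫ θ in Set.Ioc (0:ℝ) π, F k θ := by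
    rw [intervalIntegral.integral_of_le hpi]
    rw [hswap.tsum_eq]
    exact integral_congr_ae (Filter.Eventually.of_forall fun θ => hpt θ)
  rw [hIeq]
  have him := Complex.imCLM.map_tsum (f := fun k => ∫ θ in Set.Ioc (0:ℝ) π, F k θ)
    hswap.summable
  rw [show (∑' k, ∫ θ in Set.Ioc (0:ℝ) π, F k θ).im =
      Complex.imCLM (∑' k, ∫ θ in Set.Ioc (0:ℝ) π, F k θ) from rfl, him]
  have hterm : ∀ k, Complex.imCLM (∫ θ in Set.Ioc (0:ℝ) π, F k θ) =
      t ^ k / (Nat.factorial k) * (if k = n then π / 2 else 0) := by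
    intro k
    have : Complex.imCLM (∫ θ in Set.Ioc (0:ℝ) π, F k θ) =
        ∫ θ in Set.Ioc (0:ℝ) π, (F k θ).im := (integral_im (hInt k)).symm
    rw [this]
    have himpt : ∀ θ, (F k θ).im =
        t ^ k / (Nat.factorial k) * (Real.sin (k * θ) * Real.sin (n * θ)) := by
      intro θ
      rw [hFeq]
      simp only [Complex.mul_im, Complex.mul_re, Complex.ofReal_re, Complex.ofReal_im,
        Complex.exp_ofReal_mul_I_im, Complex.exp_ofReal_mul_I_re, mul_zero, zero_mul,
        add_zero, zero_add, sub_zero]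
      ring
    simp_rw [himpt]
    rw [MeasureTheory.integral_const_mul, ← intervalIntegral.integral_of_le hpi, sin_orth k n hn]
  rw [tsum_congr hterm, tsum_eq_single n (fun k hk => by simp [hk])]
  simp
end
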